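/- Fix real numbers q > 1 and y ∈ ℝ, and let ρ ∈ ℝ with ρ ≠ 0 satisfy ρ² = q^{−m} for some nonnegative integer m. Then there exists a probability measure μ on ℝ, supported on exactly m+1 points, such that ∫ H_n(x|q) dμ(x) = ρ^n·H_n(y|q) for all n ≥ 1. -/

import Mathlib

open MeasureTheory Finset

noncomputable section

/-- The `q`-integer `[n]_q = 1 + q + ⋯ + q^{n-1}`. -/
def qInt (q : ℝ) (n : ℕ) : ℝ := ∑ i ∈ Finset.range n, q ^ i

/-- The (renormalized) continuous `q`-Hermite polynomials, as functions:
`H_{-1} = 0`, `H_0 = 1`, `H_{n+1}(x) = x H_n(x) - [n]_q H_{n-1}(x)`. -/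
def qHermite (q : ℝ) : ℕ → ℝ → ℝ
  | 0 => fun _ => 1
  | 1 => fun x => x
  | n + 2 => fun x => x * qHermite q (n + 1) x - qInt q (n + 1) * qHermite q n x

open Matrix RealInnerProductSpace
open scoped ENNReal NNReal

set_option linter.unusedVariables false

namespace QH

lemma qInt_zero (q : ℝ) : qInt q 0 = 0 := by simp [qInt]

lemma qInt_one (q : ℝ) : qInt q 1 = 1 := by simp [qInt]

lemma qInt_succ (q : ℝ) (n : ℕ) : qInt q (n + 1) = qInt q n + q ^ n := by
  simp [qInt, Finset.sum_range_succ]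

lemma qInt_add (q : ℝ) (a b : ℕ) : qInt q (a + b) = qInt q a + q ^ a * qInt q b := by
  induction b with
  | zero => simp [qInt_zero]
  | succ b ih => rw [← Nat.add_assoc, qInt_succ, ih, qInt_succ, pow_add]; ring

lemma qHermite_succ_succ (q : ℝ) (n : ℕ) (x : ℝ) :
    qHermite q (n + 2) x = x * qHermite q (n + 1) x - qInt q (n + 1) * qHermite q n x := rfl

/-- q-binomial coefficients. -/
def B (q : ℝ) : ℕ → ℕ → ℝ
  | _, 0 => 1
  | 0, _ + 1 => 0
  | n + 1, k + 1 => B q n k + q ^ (k + 1) * B q n (k + 1)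

lemma B_zero_right (q : ℝ) (n : ℕ) : B q n 0 = 1 := by cases n <;> rfl

lemma B_pascal (q : ℝ) (n k : ℕ) :
    B q (n + 1) (k + 1) = B q n k + q ^ (k + 1) * B q n (k + 1) := rfl

lemma B_eq_zero (q : ℝ) : ∀ n k, n < k → B q n k = 0 := by
  intro n
  induction n with
  | zero => intro k hk; match k, hk with | k + 1, _ => rfl
  | succ n ih =>
    intro k hk
    match k, hk with
    | k + 1, hk =>
      rw [B_pascal, ih k (by omega), ih (k + 1) (by omega)]; ring

/-- Identity (ii): `[n-k] B(n,k) = [k+1] B(n,k+1)`. -/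
lemma B_id2 (q : ℝ) : ∀ n k, qInt q (n - k) * B q n k = qInt q (k + 1) * B q n (k + 1) := by
  intro n
  induction n with
  | zero =>
    intro k
    rw [Nat.zero_sub, qInt_zero, B_eq_zero q 0 (k + 1) (by omega)]; ring
  | succ n ih =>
    intro k
    rcases Nat.lt_or_ge k (n + 1) with hk | hk
    · -- k ≤ n
      cases k with
      | zero =>
        have h0 := ih 0
        simp only [Nat.sub_zero, B_zero_right, qInt_one, Nat.zero_add, mul_one, one_mul] at h0
        -- h0 : qInt q n = B q n 1
        show qInt q (n + 1) * B q (n+1) 0 = qInt q (0 + 1) * B q (n+1) (0+1)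
        rw [B_zero_right, B_pascal, B_zero_right, qInt_one, ← h0]
        have : qInt q (n + 1) = 1 + q * qInt q n := by
          have h2 := qInt_add q 1 n; rw [qInt_one] at h2
          rw [Nat.add_comm 1 n] at h2; simpa [pow_one] using h2
        rw [this]; ring
      | succ j =>
        have hj : j + 1 ≤ n := by omega
        have e1 : n + 1 - (j + 1) = n - j := by omega
        have e2 : (j + 1) + (n - j) = n + 1 := by omega
        have e3 : (j + 2) + (n - (j+1)) = n + 1 := by omega
        have ih1 := ih j      -- qInt (n-j) * B n j = qInt (j+1) * B n (j+1)
        have ih2 := ih (j + 1) -- qInt (n-j-1) * B n (j+1) = qInt (j+2) * B n (j+2)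
        rw [e1, B_pascal, B_pascal]
        -- goal: qInt (n-j) * (B n j + q^(j+1) B n (j+1)) =
        --       qInt (j+2) * (B n (j+1) + q^(j+2) B n (j+2))
        have key1 : qInt q (n - j) * B q n j + q^(j+1) * qInt q (n-j) * B q n (j+1)
            = (qInt q (j+1) + q^(j+1) * qInt q (n - j)) * B q n (j+1) := by
          rw [ih1]; ring
        have key2 : qInt q (j+2) * B q n (j+1) + q^(j+2) * (qInt q (n - (j+1)) * B q n (j+1))
            = qInt q (j+2) * B q n (j+1) + q^(j+2) * (qInt q (j+2) * B q n (j+2)) := by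
          rw [ih2]
        have l1 : qInt q (j+1) + q^(j+1) * qInt q (n - j) = qInt q (n+1) := by
          rw [← qInt_add, e2]
        have l2 : qInt q (j+2) + q^(j+2) * qInt q (n - (j+1)) = qInt q (n+1) := by
          rw [← qInt_add, e3]
        calc qInt q (n - j) * (B q n j + q ^ (j + 1) * B q n (j + 1))
            = qInt q (n - j) * B q n j + q^(j+1) * qInt q (n-j) * B q n (j+1) := by ring
          _ = qInt q (n+1) * B q n (j+1) := by rw [key1, l1]
          _ = (qInt q (j+2) + q^(j+2) * qInt q (n - (j+1))) * B q n (j+1) := by rw [l2]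
          _ = qInt q (j+2) * B q n (j+1) + q^(j+2) * (qInt q (n - (j+1)) * B q n (j+1)) := by ring
          _ = qInt q (j + 1 + 1) * (B q n (j + 1) + q ^ (j + 1 + 1) * B q n (j + 1 + 1)) := by
              rw [key2]; ring
    · -- k ≥ n + 1
      have e1 : n + 1 - k = 0 := by omega
      rw [e1, qInt_zero, B_eq_zero q (n+1) (k+1) (by omega)]; ring

/-- Identity (i): `[k+1] B(n+1,k+1) = [n+1] B(n,k)`. -/
lemma B_id1 (q : ℝ) (n k : ℕ) :
    qInt q (k + 1) * B q (n + 1) (k + 1) = qInt q (n + 1) * B q n k := by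
  rcases Nat.lt_or_ge n k with h | h
  · rw [B_eq_zero q (n+1) (k+1) (by omega), B_eq_zero q n k h]; ring
  · rw [B_pascal]
    have h2 := B_id2 q n k  -- qInt (n-k) * B n k = qInt (k+1) * B n (k+1)
    have e2 : (k + 1) + (n - k) = n + 1 := by omega
    calc qInt q (k+1) * (B q n k + q^(k+1) * B q n (k+1))
        = qInt q (k+1) * B q n k + q^(k+1) * (qInt q (k+1) * B q n (k+1)) := by ring
      _ = qInt q (k+1) * B q n k + q^(k+1) * (qInt q (n-k) * B q n k) := by rw [h2]
      _ = (qInt q (k+1) + q^(k+1) * qInt q (n-k)) * B q n k := by ring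
      _ = qInt q (n+1) * B q n k := by rw [← qInt_add, e2]

variable (q y ρ : ℝ)

/-- diagonal Jacobi coefficients -/
def aa (k : ℕ) : ℝ := ρ * y * q ^ k

/-- squared off-diagonal Jacobi coefficients: `λ_k = (1 - ρ² q^{k-1}) [k]_q`. -/
def lam (k : ℕ) : ℝ := (1 - ρ ^ 2 * q ^ (k - 1)) * qInt q k

lemma lam_zero : lam q ρ 0 = 0 := by simp [lam, qInt_zero]

lemma lam_succ (j : ℕ) : lam q ρ (j + 1) = (1 - ρ^2 * q^j) * qInt q (j+1) := by
  rw [lam]; norm_num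

/-- Al-Salam–Chihara-type polynomials. -/
def P : ℕ → ℝ → ℝ
  | 0 => fun _ => 1
  | 1 => fun x => x - aa q y ρ 0
  | n + 2 => fun x => (x - aa q y ρ (n + 1)) * P (n + 1) x - lam q ρ (n + 1) * P n x

lemma x_mul_P (k : ℕ) (x : ℝ) :
    x * P q y ρ k x = P q y ρ (k + 1) x + aa q y ρ k * P q y ρ k x
      + lam q ρ k * (match k with | 0 => 0 | j + 1 => P q y ρ j x) := by
  match k with
  | 0 =>
    show x * 1 = (x - aa q y ρ 0) + aa q y ρ 0 * 1 + lam q ρ 0 * 0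
    rw [lam_zero]; ring
  | j + 1 =>
    show x * P q y ρ (j+1) x
      = ((x - aa q y ρ (j + 1)) * P q y ρ (j + 1) x - lam q ρ (j + 1) * P q y ρ j x)
        + aa q y ρ (j+1) * P q y ρ (j+1) x + lam q ρ (j+1) * P q y ρ j x
    ring

/-- Connection coefficients. -/
def c (n k : ℕ) : ℝ := B q n k * ρ ^ (n - k) * qHermite q (n - k) y

lemma c_eq_zero (n k : ℕ) (h : n < k) : c q y ρ n k = 0 := by
  rw [c, B_eq_zero q n k h]; ring

lemma c_zero_right (n : ℕ) : c q y ρ n 0 = ρ ^ n * qHermite q n y := by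
  rw [c, B_zero_right, Nat.sub_zero]; ring

/-- The key coefficient identity. -/
lemma c_key (n k : ℕ) :
    c q y ρ (n + 2) k
      = (match k with | 0 => 0 | j + 1 => c q y ρ (n + 1) j)
        + aa q y ρ k * c q y ρ (n + 1) k + lam q ρ (k + 1) * c q y ρ (n + 1) (k + 1)
        - qInt q (n + 1) * c q y ρ n k := by
  match k with
  | 0 =>
    show c q y ρ (n+2) 0 = 0 + aa q y ρ 0 * c q y ρ (n+1) 0 + lam q ρ 1 * c q y ρ (n+1) 1
        - qInt q (n+1) * c q y ρ n 0
    have h1 : B q (n + 1) 1 = qInt q (n+1) := by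
      have h := B_id1 q n 0
      rw [qInt_one, B_zero_right, one_mul, mul_one] at h
      exact h
    simp only [c, B_zero_right, Nat.sub_zero, lam_succ, h1, aa, Nat.zero_add, qInt_one,
      Nat.add_sub_cancel, pow_zero]
    rw [qHermite_succ_succ]
    ring
  | j + 1 =>
    show c q y ρ (n+2) (j+1) = c q y ρ (n+1) j
        + aa q y ρ (j+1) * c q y ρ (n+1) (j+1) + lam q ρ (j+2) * c q y ρ (n+1) (j+2)
        - qInt q (n+1) * c q y ρ n (j+1)
    rcases Nat.lt_or_ge n j with h | h
    · rcases Nat.lt_or_ge (n + 2) (j + 1) with h2 | h2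
      · -- k = j+1 > n+2 : everything zero
        rw [c_eq_zero q y ρ (n+2) (j+1) h2, c_eq_zero q y ρ (n+1) j (by omega),
          c_eq_zero q y ρ (n+1) (j+1) (by omega), c_eq_zero q y ρ (n+1) (j+2) (by omega),
          c_eq_zero q y ρ n (j+1) (by omega)]
        ring
      · -- j = n + 1, k = n + 2
        have hj : j = n + 1 := by omega
        subst hj
        rw [c_eq_zero q y ρ (n+1) (n+3) (by omega), c_eq_zero q y ρ (n+1) (n+2) (by omega),
          c_eq_zero q y ρ n (n+2) (by omega)]
        simp only [c, Nat.sub_self, pow_zero, mul_one]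
        simp only [show n + 1 + 1 = n + 2 from rfl, show n + 1 + 2 = n + 3 from rfl]
        rw [show (B q (n+2) (n+2) : ℝ) = B q (n+1) (n+1) + q^(n+2) * B q (n+1) (n+2) from
            B_pascal q (n+1) (n+1),
          B_eq_zero q (n+1) (n+2) (by omega)]
        ring
    · -- main case : j ≤ n, write n = j + d
      obtain ⟨d, rfl⟩ : ∃ d, n = j + d := ⟨n - j, by omega⟩
      have e1 : j + d + 2 - (j + 1) = d + 1 := by omega
      have e2 : j + d + 1 - j = d + 1 := by omega
      have e3 : j + d + 1 - (j + 1) = d := by omega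
      have e4 : j + d + 1 - (j + 2) = d - 1 := by omega
      have e5 : j + d - (j + 1) = d - 1 := by omega
      simp only [c, e1, e2, e3, e4, e5]
      rw [B_pascal q (j + d + 1) j]
      have hid1 : qInt q (j + 2) * B q (j + d + 1) (j + 2)
          = qInt q (j + d + 1) * B q (j+d) (j+1) := B_id1 q (j + d) (j + 1)
      have hid2 : qInt q d * B q (j+d+1) (j+1) = qInt q (j + 2) * B q (j+d+1) (j+2) := by
        have h2 := B_id2 q (j + d + 1) (j + 1)
        rwa [e3] at h2
      rw [lam_succ, aa]
      match d with
      | 0 =>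
        simp only [Nat.add_zero, Nat.zero_add, Nat.zero_sub, pow_zero, pow_one]
        rw [B_eq_zero q (j+1) (j+2) (by omega), B_eq_zero q j (j+1) (by omega)]
        simp only [show qHermite q 1 y = y from rfl, show qHermite q 0 y = 1 from rfl]
        ring
      | e + 1 =>
        simp only [Nat.add_sub_cancel]
        rw [qHermite_succ_succ]
        linear_combination (-(q^(j+1)) * ρ^2 * ρ^e * qHermite q e y) * hid2
          - (ρ^e * qHermite q e y) * hid1

lemma shuffle (d : ℕ → ℝ) (N : ℕ) (hd : ∀ k, N ≤ k → d k = 0) (x : ℝ) :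
    x * ∑ k ∈ Finset.range (N+1), d k * P q y ρ k x
      = ∑ k ∈ Finset.range (N+1),
          ((match k with | 0 => 0 | j+1 => d j) + aa q y ρ k * d k
            + lam q ρ (k+1) * d (k+1)) * P q y ρ k x := by
  rw [Finset.mul_sum]
  have step : ∀ k, x * (d k * P q y ρ k x)
      = d k * P q y ρ (k+1) x + aa q y ρ k * d k * P q y ρ k x
        + d k * (lam q ρ k * (match k with | 0 => (0:ℝ) | j + 1 => P q y ρ j x)) := by
    intro k
    have h := x_mul_P q y ρ k x
    calc x * (d k * P q y ρ k x) = d k * (x * P q y ρ k x) := by ring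
      _ = _ := by rw [h]; ring
  rw [Finset.sum_congr rfl (fun k _ => step k)]
  rw [Finset.sum_add_distrib, Finset.sum_add_distrib]
  have hT1 : ∑ k ∈ Finset.range (N+1), d k * P q y ρ (k+1) x
      = ∑ k ∈ Finset.range (N+1),
          (match k with | 0 => (0:ℝ) | j+1 => d j) * P q y ρ k x := by
    rw [Finset.sum_range_succ, hd N le_rfl, Finset.sum_range_succ' (fun k =>
      (match k with | 0 => (0:ℝ) | j+1 => d j) * P q y ρ k x) N]
    simp
  have hT3 : ∑ k ∈ Finset.range (N+1),
        d k * (lam q ρ k * (match k with | 0 => (0:ℝ) | j + 1 => P q y ρ j x))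
      = ∑ k ∈ Finset.range (N+1), lam q ρ (k+1) * d (k+1) * P q y ρ k x := by
    rw [Finset.sum_range_succ' (fun k =>
      d k * (lam q ρ k * (match k with | 0 => (0:ℝ) | j + 1 => P q y ρ j x))) N,
      Finset.sum_range_succ (fun k => lam q ρ (k+1) * d (k+1) * P q y ρ k x) N,
      hd (N+1) (by omega)]
    simp [lam_zero]
    exact Finset.sum_congr rfl (fun k _ => by ring)
  rw [hT1, hT3, ← Finset.sum_add_distrib, ← Finset.sum_add_distrib]
  exact Finset.sum_congr rfl (fun k _ => by ring)

lemma c_top_zero (n : ℕ) : c q y ρ n (n+1) = 0 := c_eq_zero q y ρ n (n+1) (by omega)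

theorem connection : ∀ n, ∀ x : ℝ,
    qHermite q n x = ∑ k ∈ Finset.range (n+1), c q y ρ n k * P q y ρ k x := by
  intro n
  induction n using Nat.strong_induction_on with
  | _ n ih =>
    match n with
    | 0 =>
      intro x
      simp [qHermite, c, B_zero_right, P]
    | 1 =>
      intro x
      show x = _
      rw [Finset.sum_range_succ, Finset.sum_range_one]
      show x = c q y ρ 1 0 * 1 + c q y ρ 1 1 * (x - aa q y ρ 0)
      have h1 : c q y ρ 1 1 = 1 := by
        show B q 1 1 * ρ ^ 0 * qHermite q 0 y = 1
        rw [B_pascal q 0 0, B_zero_right, B_eq_zero q 0 1 (by omega)]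
        show (1 + q^1 * 0) * 1 * 1 = 1; ring
      have h0 : c q y ρ 1 0 = ρ * y := by
        rw [c_zero_right]; show ρ^1 * y = ρ * y; ring
      rw [h0, h1, aa]; ring
    | n + 2 =>
      intro x
      have ih1 := ih (n+1) (by omega) x
      have ih0 := ih n (by omega) x
      rw [qHermite_succ_succ, ih1, ih0]
      -- extend IH sums to range (n+3)
      have ext1 : ∑ k ∈ Finset.range (n+2), c q y ρ (n+1) k * P q y ρ k x
          = ∑ k ∈ Finset.range (n+3), c q y ρ (n+1) k * P q y ρ k x := by
        rw [Finset.sum_range_succ (fun k => c q y ρ (n+1) k * P q y ρ k x) (n+2),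
          c_eq_zero q y ρ (n+1) (n+2) (by omega)]
        ring
      have ext0 : ∑ k ∈ Finset.range (n+1), c q y ρ n k * P q y ρ k x
          = ∑ k ∈ Finset.range (n+3), c q y ρ n k * P q y ρ k x := by
        rw [Finset.sum_range_succ (fun k => c q y ρ n k * P q y ρ k x) (n+2),
          Finset.sum_range_succ (fun k => c q y ρ n k * P q y ρ k x) (n+1),
          c_eq_zero q y ρ n (n+2) (by omega), c_eq_zero q y ρ n (n+1) (by omega)]
        ring
      rw [ext1, ext0]
      rw [shuffle q y ρ (c q y ρ (n+1)) (n+2)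
        (fun k hk => c_eq_zero q y ρ (n+1) k (by omega)) x]
      rw [Finset.mul_sum, ← Finset.sum_sub_distrib]
      refine (Finset.sum_congr rfl (fun k _ => ?_)).symm
      rw [c_key q y ρ n k]
      ring

section Pos
variable {q ρ : ℝ} {m : ℕ}

lemma qInt_pos (hq : 1 < q) {k : ℕ} (hk : 1 ≤ k) : 0 < qInt q k := by
  have : ∀ i ∈ Finset.range k, (0:ℝ) < q ^ i := fun i _ => pow_pos (by linarith) i
  exact Finset.sum_pos this (Finset.nonempty_range_iff.mpr (by omega))

lemma lam_pos (hq : 1 < q) (hm : ρ^2 = (q^m)⁻¹) {k : ℕ} (h1 : 1 ≤ k) (h2 : k ≤ m) :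
    0 < lam q ρ k := by
  have hq0 : (0:ℝ) < q := by linarith
  have hqm : (0:ℝ) < q ^ m := pow_pos hq0 m
  have hlt : q ^ (k-1) < q ^ m := pow_lt_pow_right₀ hq (by omega)
  have : ρ^2 * q^(k-1) < 1 := by
    rw [hm]
    rw [inv_mul_lt_iff₀ hqm, mul_one]
    exact hlt
  have h3 : 0 < 1 - ρ^2 * q^(k-1) := by linarith
  exact mul_pos h3 (qInt_pos hq h1)

lemma lam_nonneg (hq : 1 < q) (hm : ρ^2 = (q^m)⁻¹) {k : ℕ} (h2 : k ≤ m) :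
    0 ≤ lam q ρ k := by
  rcases Nat.eq_zero_or_pos k with rfl | hk
  · rw [lam_zero]
  · exact le_of_lt (lam_pos hq hm hk h2)

lemma lam_top (hq : 1 < q) (hm : ρ^2 = (q^m)⁻¹) : lam q ρ (m+1) = 0 := by
  rw [lam_succ]
  have hqm : (q:ℝ) ^ m ≠ 0 := by positivity
  rw [hm, inv_mul_cancel₀ hqm]
  ring

end Pos

/-- off-diagonal entries -/
def sq (q ρ : ℝ) (k : ℕ) : ℝ := Real.sqrt (lam q ρ k)

lemma sq_sq {q ρ : ℝ} {m : ℕ} (hq : 1 < q) (hm : ρ^2 = (q^m)⁻¹) {k : ℕ} (h2 : k ≤ m) :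
    sq q ρ k ^ 2 = lam q ρ k := Real.sq_sqrt (lam_nonneg hq hm h2)

lemma sq_pos {q ρ : ℝ} {m : ℕ} (hq : 1 < q) (hm : ρ^2 = (q^m)⁻¹) {k : ℕ}
    (h1 : 1 ≤ k) (h2 : k ≤ m) : 0 < sq q ρ k :=
  Real.sqrt_pos.mpr (lam_pos hq hm h1 h2)

/-- partial products of off-diagonal entries -/
def gam (q ρ : ℝ) (k : ℕ) : ℝ := ∏ i ∈ Finset.range k, sq q ρ (i+1)

lemma gam_zero (q ρ : ℝ) : gam q ρ 0 = 1 := by simp [gam]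

lemma gam_succ (q ρ : ℝ) (k : ℕ) : gam q ρ (k+1) = gam q ρ k * sq q ρ (k+1) := by
  rw [gam, Finset.prod_range_succ]; rfl

lemma gam_pos {q ρ : ℝ} {m : ℕ} (hq : 1 < q) (hm : ρ^2 = (q^m)⁻¹) {k : ℕ} (h2 : k ≤ m) :
    0 < gam q ρ k := by
  refine Finset.prod_pos (fun i hi => ?_)
  have := Finset.mem_range.mp hi
  exact sq_pos hq hm (by omega) (by omega)

/-- The Jacobi matrix. -/
def S (q y ρ : ℝ) (m : ℕ) : Matrix (Fin (m+1)) (Fin (m+1)) ℝ :=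
  Matrix.of fun i j =>
    if (i:ℕ) = j then aa q y ρ i
    else if (i:ℕ)+1 = j then sq q ρ j
    else if (j:ℕ)+1 = i then sq q ρ i else 0

lemma S_herm (q y ρ : ℝ) (m : ℕ) : (S q y ρ m).IsHermitian := by
  show (S q y ρ m).conjTranspose = S q y ρ m
  ext i j
  simp only [Matrix.conjTranspose_apply, S, Matrix.of_apply, star_trivial]
  split_ifs with h1 h2 h3 h4 h5 h6 h7 h8 h9 <;> first
    | rfl | omega | (rw [show (j:ℕ) = (i:ℕ) from by omega])

lemma S_apply (q y ρ : ℝ) (m : ℕ) (i j : Fin (m+1)) :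
    S q y ρ m i j = if (i:ℕ) = j then aa q y ρ i
      else if (i:ℕ)+1 = j then sq q ρ j
      else if (j:ℕ)+1 = i then sq q ρ i else 0 := rfl

/-- The vectors `P_k(S) e₀`. -/
def vv (q y ρ : ℝ) (m : ℕ) : ℕ → EuclideanSpace ℝ (Fin (m+1))
  | 0 => EuclideanSpace.single 0 1
  | 1 => (WithLp.equiv 2 (Fin (m+1) → ℝ)).symm (S q y ρ m *ᵥ vv q y ρ m 0) - aa q y ρ 0 • vv q y ρ m 0
  | n + 2 => (WithLp.equiv 2 (Fin (m+1) → ℝ)).symm (S q y ρ m *ᵥ vv q y ρ m (n+1)) - aa q y ρ (n+1) • vv q y ρ m (n+1)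
      - lam q ρ (n+1) • vv q y ρ m n

variable {m : ℕ}

lemma mulVec_coord {q y ρ : ℝ} (f : EuclideanSpace ℝ (Fin (m+1))) (k : ℕ) (hk : k ≤ m)
    (hf : ∀ j : Fin (m+1), f j = if (j:ℕ) = k then gam q ρ k else 0) (i : Fin (m+1)) :
    (S q y ρ m *ᵥ f) i
      = (if (i:ℕ) = k then aa q y ρ k
         else if (i:ℕ)+1 = k then sq q ρ k
         else if (i:ℕ) = k+1 then sq q ρ (k+1) else 0) * gam q ρ k := by
  show ∑ j, S q y ρ m i j * f j = _
  rw [Finset.sum_eq_single (⟨k, by omega⟩ : Fin (m+1))]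
  · rw [hf]
    have hval : ((⟨k, by omega⟩ : Fin (m+1)) : ℕ) = k := rfl
    rw [hval, if_pos rfl, S_apply, hval]
    by_cases h1 : (i:ℕ) = k
    · rw [if_pos h1, if_pos h1, h1]
    · rw [if_neg h1, if_neg h1]
      by_cases h2 : (i:ℕ)+1 = k
      · rw [if_pos h2, if_pos h2]
      · rw [if_neg h2, if_neg h2]
        by_cases h3 : (i:ℕ) = k+1
        · rw [if_pos (show k+1 = (i:ℕ) from h3.symm), if_pos h3, h3]
        · rw [if_neg (fun h => h3 h.symm), if_neg h3]
  · intro b _ hb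
    have hbk : (b:ℕ) ≠ k := fun h => hb (Fin.ext h)
    rw [hf, if_neg hbk, mul_zero]
  · intro h; exact absurd (Finset.mem_univ _) h

lemma vv_le {q y ρ : ℝ} (hq : 1 < q) (hm : ρ^2 = (q^m)⁻¹) :
    ∀ k, k ≤ m → ∀ i : Fin (m+1),
      vv q y ρ m k i = if (i:ℕ) = k then gam q ρ k else 0 := by
  intro k
  induction k using Nat.strong_induction_on with
  | _ k ih =>
    match k with
    | 0 =>
      intro _ i
      show EuclideanSpace.single (0 : Fin (m+1)) (1:ℝ) i = _
      rw [EuclideanSpace.single_apply, gam_zero]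
      by_cases h : (i:ℕ) = 0
      · rw [if_pos h, if_pos (Fin.ext h)]
      · rw [if_neg h, if_neg (fun hh => h (by rw [hh]; rfl))]
    | 1 =>
      intro hk i
      show (S q y ρ m *ᵥ vv q y ρ m 0) i - aa q y ρ 0 * vv q y ρ m 0 i = _
      rw [mulVec_coord (vv q y ρ m 0) 0 (by omega) (ih 0 (by omega) (by omega)),
        ih 0 (by omega) (by omega) i, gam_zero]
      by_cases h1 : (i:ℕ) = 0
      · rw [if_pos h1, if_pos h1, if_neg (by omega)]
        ring
      · rw [if_neg h1, if_neg h1, if_neg (by omega)]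
        by_cases h3 : (i:ℕ) = 1
        · rw [if_pos h3, if_pos h3, gam_succ, gam_zero]
          ring
        · rw [if_neg h3, if_neg h3]
          ring
    | k + 2 =>
      intro hk i
      show (S q y ρ m *ᵥ vv q y ρ m (k+1)) i - aa q y ρ (k+1) * vv q y ρ m (k+1) i
          - lam q ρ (k+1) * vv q y ρ m k i = _
      rw [mulVec_coord (vv q y ρ m (k+1)) (k+1) (by omega) (ih (k+1) (by omega) (by omega)),
        ih (k+1) (by omega) (by omega) i, ih k (by omega) (by omega) i]
      by_cases h1 : (i:ℕ) = k+1
      · rw [if_pos h1, if_pos h1, if_neg (by omega), if_neg (by omega)]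
        ring
      · rw [if_neg h1, if_neg h1]
        by_cases h2 : (i:ℕ) = k
        · rw [if_pos (show (i:ℕ)+1 = k+1 by omega), if_pos h2, if_neg (by omega)]
          rw [gam_succ]
          have hs := sq_sq hq hm (show k+1 ≤ m by omega)
          linear_combination gam q ρ k * hs
        · rw [if_neg (by omega), if_neg h2]
          by_cases h3 : (i:ℕ) = k+2
          · rw [if_pos h3, if_pos h3, gam_succ q ρ (k+1)]
            ring
          · rw [if_neg h3, if_neg h3]
            ring

lemma vv_gt {q y ρ : ℝ} (hq : 1 < q) (hm : ρ^2 = (q^m)⁻¹) :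
    ∀ k, vv q y ρ m (m+1+k) = 0 := by
  intro k
  induction k using Nat.strong_induction_on with
  | _ k ih =>
    match k with
    | 0 =>
      clear ih
      match m, hm with
      | 0, hm =>
        ext i
        show (S q y ρ 0 *ᵥ vv q y ρ 0 0) i - aa q y ρ 0 * vv q y ρ 0 0 i = 0
        rw [mulVec_coord (vv q y ρ 0 0) 0 le_rfl (vv_le hq hm 0 le_rfl),
          vv_le hq hm 0 le_rfl i]
        have h1 : (i:ℕ) = 0 := by omega
        rw [if_pos h1, if_pos h1]
        ring
      | t+1, hm =>
        ext i
        show (S q y ρ (t+1) *ᵥ vv q y ρ (t+1) (t+1)) i - aa q y ρ (t+1) * vv q y ρ (t+1) (t+1) i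
            - lam q ρ (t+1) * vv q y ρ (t+1) t i = 0
        rw [mulVec_coord (vv q y ρ (t+1) (t+1)) (t+1) (by omega)
            (vv_le hq hm (t+1) (by omega)),
          vv_le hq hm (t+1) (by omega) i, vv_le hq hm t (by omega) i]
        by_cases h1 : (i:ℕ) = t+1
        · rw [if_pos h1, if_pos h1, if_neg (by omega)]
          ring
        · rw [if_neg h1, if_neg h1]
          by_cases h2 : (i:ℕ) = t
          · rw [if_pos (show (i:ℕ)+1 = t+1 by omega), if_pos h2]
            rw [gam_succ]
            have hs := sq_sq hq hm (show t+1 ≤ t+1 by omega)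
            linear_combination gam q ρ t * hs
          · rw [if_neg (by omega), if_neg h2, if_neg (by omega)]
            ring
    | 1 =>
      have h0 : vv q y ρ m (m+1) = 0 := ih 0 (by omega)
      show (WithLp.equiv 2 (Fin (m+1) → ℝ)).symm (S q y ρ m *ᵥ vv q y ρ m (m+1))
          - aa q y ρ (m+1) • vv q y ρ m (m+1) - lam q ρ (m+1) • vv q y ρ m m = 0
      rw [h0, WithLp.ofLp_zero, Matrix.mulVec_zero, lam_top hq hm, smul_zero, zero_smul]
      simp
    | k + 2 =>
      have h1 : vv q y ρ m (m+1+k+1) = 0 := ih (k+1) (by omega)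
      have h2 : vv q y ρ m (m+1+k) = 0 := ih k (by omega)
      show (WithLp.equiv 2 (Fin (m+1) → ℝ)).symm (S q y ρ m *ᵥ vv q y ρ m (m+1+k+1))
          - aa q y ρ (m+1+k+1) • vv q y ρ m (m+1+k+1)
          - lam q ρ (m+1+k+1) • vv q y ρ m (m+1+k) = 0
      rw [h1, h2, WithLp.ofLp_zero, Matrix.mulVec_zero, smul_zero, smul_zero]
      simp

lemma inner_dot (x z : EuclideanSpace ℝ (Fin (m+1))) : ⟪x, z⟫ = ∑ i, x i * z i := by
  simp [PiLp.inner_apply, RCLike.inner_apply, conj_trivial]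
  exact Finset.sum_congr rfl fun i _ => mul_comm _ _

lemma S_symm_entries (q y ρ : ℝ) (m : ℕ) (i j : Fin (m+1)) :
    S q y ρ m i j = S q y ρ m j i := by
  have h : (S q y ρ m)ᴴ = S q y ρ m := S_herm q y ρ m
  calc S q y ρ m i j = (S q y ρ m)ᴴ i j := by rw [h]
    _ = star (S q y ρ m j i) := rfl
    _ = S q y ρ m j i := star_trivial _

lemma inner_symm_move (q y ρ : ℝ) (m : ℕ) (x z : EuclideanSpace ℝ (Fin (m+1))) :
    ⟪(WithLp.equiv 2 (Fin (m+1) → ℝ)).symm (S q y ρ m *ᵥ x), z⟫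
      = ⟪x, (WithLp.equiv 2 (Fin (m+1) → ℝ)).symm (S q y ρ m *ᵥ z)⟫ := by
  rw [inner_dot, inner_dot]
  show ∑ i, (∑ j, S q y ρ m i j * x j) * z i = ∑ i, x i * ∑ j, S q y ρ m i j * z j
  rw [Finset.sum_congr rfl (fun i _ => Finset.sum_mul ..)]
  rw [Finset.sum_comm]
  refine Finset.sum_congr rfl (fun j _ => ?_)
  rw [Finset.mul_sum]
  refine Finset.sum_congr rfl (fun i _ => ?_)
  rw [S_symm_entries q y ρ m i j]
  ring

lemma inner_vv_zero (q y ρ : ℝ) (m : ℕ) (x : EuclideanSpace ℝ (Fin (m+1))) :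
    ⟪vv q y ρ m 0, x⟫ = x 0 := by
  rw [inner_dot]
  show ∑ i, (EuclideanSpace.single (0 : Fin (m+1)) (1:ℝ)) i * x i = x 0
  rw [Finset.sum_eq_single (0 : Fin (m+1))]
  · rw [EuclideanSpace.single_apply, if_pos rfl, one_mul]
  · intro b _ hb
    rw [EuclideanSpace.single_apply, if_neg hb, zero_mul]
  · intro h; exact absurd (Finset.mem_univ _) h

/-- The key spectral identity: `⟪u_j, v_k⟫ = u_j(0) ⬝ P_k(t_j)`. -/
lemma keyInner (q y ρ : ℝ) (m : ℕ) :
    ∀ k (j : Fin (m+1)),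
      ⟪((S_herm q y ρ m).eigenvectorBasis j : EuclideanSpace ℝ (Fin (m+1))), vv q y ρ m k⟫
        = (S_herm q y ρ m).eigenvectorBasis j 0 * P q y ρ k ((S_herm q y ρ m).eigenvalues j) := by
  intro k
  set b := (S_herm q y ρ m).eigenvectorBasis with hb
  set tt := (S_herm q y ρ m).eigenvalues with htt
  induction k using Nat.strong_induction_on with
  | _ k ih =>
    have hmove : ∀ (l : ℕ) (j : Fin (m+1)),
        ⟪(b j : EuclideanSpace ℝ (Fin (m+1))),
          (WithLp.equiv 2 (Fin (m+1) → ℝ)).symm (S q y ρ m *ᵥ vv q y ρ m l)⟫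
          = tt j * ⟪(b j : EuclideanSpace ℝ (Fin (m+1))), vv q y ρ m l⟫ := by
      intro l j
      rw [← inner_symm_move q y ρ m (b j) (vv q y ρ m l)]
      have hev : S q y ρ m *ᵥ (b j : EuclideanSpace ℝ (Fin (m+1))) = tt j • (b j : Fin (m+1) → ℝ) :=
        (S_herm q y ρ m).mulVec_eigenvectorBasis j
      rw [hev, WithLp.equiv_symm_apply, WithLp.toLp_smul]
      rw [real_inner_smul_left]
    match k with
    | 0 =>
      intro j
      have h := inner_vv_zero q y ρ m (b j)
      rw [real_inner_comm] at h
      rw [h]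
      show b j 0 = b j 0 * 1
      ring
    | 1 =>
      intro j
      show ⟪(b j : EuclideanSpace ℝ (Fin (m+1))),
          (WithLp.equiv 2 (Fin (m+1) → ℝ)).symm (S q y ρ m *ᵥ vv q y ρ m 0)
            - aa q y ρ 0 • vv q y ρ m 0⟫ = _
      rw [inner_sub_right, real_inner_smul_right, hmove 0 j, ih 0 (by omega) j]
      show tt j * (b j 0 * 1) - aa q y ρ 0 * (b j 0 * 1) = b j 0 * (tt j - aa q y ρ 0)
      ring
    | k + 2 =>
      intro j
      show ⟪(b j : EuclideanSpace ℝ (Fin (m+1))),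
          (WithLp.equiv 2 (Fin (m+1) → ℝ)).symm (S q y ρ m *ᵥ vv q y ρ m (k+1))
            - aa q y ρ (k+1) • vv q y ρ m (k+1) - lam q ρ (k+1) • vv q y ρ m k⟫ = _
      rw [inner_sub_right, inner_sub_right, real_inner_smul_right, real_inner_smul_right,
        hmove (k+1) j, ih (k+1) (by omega) j, ih k (by omega) j]
      show tt j * (b j 0 * P q y ρ (k+1) (tt j)) - aa q y ρ (k+1) * (b j 0 * P q y ρ (k+1) (tt j))
          - lam q ρ (k+1) * (b j 0 * P q y ρ k (tt j))
        = b j 0 * ((tt j - aa q y ρ (k+1)) * P q y ρ (k+1) (tt j) - lam q ρ (k+1) * P q y ρ k (tt j))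
      ring

lemma integrable_dirac_any (f : ℝ → ℝ) (a : ℝ) : Integrable f (Measure.dirac a) := by
  refine ⟨(aestronglyMeasurable_const (b := f a)).congr ?_, ?_⟩
  · rw [Filter.EventuallyEq, ae_iff, Measure.dirac_apply, Set.indicator_of_notMem]
    simp
  · show ∫⁻ x, (‖f x‖₊ : ℝ≥0∞) ∂(Measure.dirac a) < ⊤
    rw [lintegral_dirac]
    exact ENNReal.coe_lt_top

lemma integral_sum_dirac {N : ℕ} (w : Fin N → ℝ) (t : Fin N → ℝ) (f : ℝ → ℝ) :
    ∫ x, f x ∂(∑ j : Fin N, ENNReal.ofReal ((w j)^2) • Measure.dirac (t j))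
      = ∑ j : Fin N, (w j)^2 * f (t j) := by
  rw [MeasureTheory.integral_finset_sum_measure
    (fun j _ => (integrable_dirac_any f (t j)).smul_measure ENNReal.ofReal_ne_top)]
  refine Finset.sum_congr rfl (fun j _ => ?_)
  rw [integral_smul_measure, integral_dirac, ENNReal.toReal_ofReal (sq_nonneg _), smul_eq_mul]

section Main

variable {q y ρ : ℝ} {m : ℕ}

lemma sum_w_P (hq : 1 < q) (hm : ρ^2 = (q^m)⁻¹) (k : ℕ) :
    ∑ j : Fin (m+1), ((S_herm q y ρ m).eigenvectorBasis j 0)^2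
        * P q y ρ k ((S_herm q y ρ m).eigenvalues j)
      = if k = 0 then 1 else 0 := by
  have h1 : ∀ j : Fin (m+1),
      ((S_herm q y ρ m).eigenvectorBasis j 0)^2 * P q y ρ k ((S_herm q y ρ m).eigenvalues j)
        = ⟪vv q y ρ m 0, ((S_herm q y ρ m).eigenvectorBasis j : EuclideanSpace ℝ (Fin (m+1)))⟫
          * ⟪((S_herm q y ρ m).eigenvectorBasis j : EuclideanSpace ℝ (Fin (m+1))), vv q y ρ m k⟫ := by
    intro j
    rw [keyInner q y ρ m k j, inner_vv_zero q y ρ m]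
    ring
  rw [Finset.sum_congr rfl (fun j _ => h1 j),
    OrthonormalBasis.sum_inner_mul_inner ((S_herm q y ρ m).eigenvectorBasis)]
  rw [inner_vv_zero q y ρ m (vv q y ρ m k)]
  rcases Nat.eq_zero_or_pos k with rfl | hk
  · rw [if_pos rfl]
    show EuclideanSpace.single (0 : Fin (m+1)) (1:ℝ) 0 = 1
    rw [EuclideanSpace.single_apply, if_pos rfl]
  · rw [if_neg (by omega)]
    rcases Nat.lt_or_ge m k with hgt | hle
    · rw [show k = m+1+(k-(m+1)) from by omega, vv_gt hq hm (k-(m+1))]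
      rfl
    · rw [vv_le hq hm k hle 0]
      rw [if_neg (by simp; omega)]

lemma sum_w_one (hq : 1 < q) (hm : ρ^2 = (q^m)⁻¹) :
    ∑ j : Fin (m+1), ((S_herm q y ρ m).eigenvectorBasis j 0)^2 = 1 := by
  have h := sum_w_P (y := y) hq hm 0
  rw [if_pos rfl] at h
  rw [← h]
  exact Finset.sum_congr rfl (fun j _ => by
    show _ = _ * P q y ρ 0 ((S_herm q y ρ m).eigenvalues j)
    show _ = _ * 1
    ring)

lemma sum_w_H (hq : 1 < q) (hm : ρ^2 = (q^m)⁻¹) (n : ℕ) :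
    ∑ j : Fin (m+1), ((S_herm q y ρ m).eigenvectorBasis j 0)^2
        * qHermite q n ((S_herm q y ρ m).eigenvalues j)
      = ρ^n * qHermite q n y := by
  have h1 : ∀ j : Fin (m+1),
      ((S_herm q y ρ m).eigenvectorBasis j 0)^2 * qHermite q n ((S_herm q y ρ m).eigenvalues j)
        = ∑ k ∈ Finset.range (n+1), c q y ρ n k *
            (((S_herm q y ρ m).eigenvectorBasis j 0)^2
              * P q y ρ k ((S_herm q y ρ m).eigenvalues j)) := by
    intro j
    rw [connection q y ρ n ((S_herm q y ρ m).eigenvalues j), Finset.mul_sum]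
    exact Finset.sum_congr rfl (fun k _ => by ring)
  rw [Finset.sum_congr rfl (fun j _ => h1 j), Finset.sum_comm]
  have h2 : ∀ k ∈ Finset.range (n+1),
      (∑ j : Fin (m+1), c q y ρ n k *
        (((S_herm q y ρ m).eigenvectorBasis j 0)^2
          * P q y ρ k ((S_herm q y ρ m).eigenvalues j)))
      = c q y ρ n k * (if k = 0 then 1 else 0) := by
    intro k _
    rw [← Finset.mul_sum, sum_w_P hq hm k]
  rw [Finset.sum_congr rfl h2, Finset.sum_eq_single 0]
  · rw [if_pos rfl, mul_one, c_zero_right]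
  · intro k _ hk
    rw [if_neg hk, mul_zero]
  · intro h
    exact absurd (Finset.mem_range.mpr (by omega)) h

theorem main (q y ρ : ℝ) (hq : 1 < q) (hρ : ρ ≠ 0)
    (m : ℕ) (hm : ρ ^ 2 = (q ^ m)⁻¹) :
    ∃ μ : MeasureTheory.Measure ℝ, IsProbabilityMeasure μ ∧
      (∃ s : Finset ℝ, s.card = m + 1 ∧ μ (↑s)ᶜ = 0 ∧ ∀ x ∈ s, μ {x} ≠ 0) ∧
      (∀ n : ℕ, 1 ≤ n → ∫ x, qHermite q n x ∂μ = ρ ^ n * qHermite q n y) := by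
  classical
  set bb := (S_herm q y ρ m).eigenvectorBasis with hbb
  set tt := (S_herm q y ρ m).eigenvalues with htt
  refine ⟨∑ j : Fin (m+1), ENNReal.ofReal ((bb j 0)^2) • Measure.dirac (tt j), ?_, ?_, ?_⟩
  · -- probability measure
    constructor
    rw [Measure.finset_sum_apply]
    have h1 : ∀ j : Fin (m+1),
        (ENNReal.ofReal ((bb j 0)^2) • Measure.dirac (tt j)) Set.univ
          = ENNReal.ofReal ((bb j 0)^2) := by
      intro j
      rw [Measure.smul_apply, measure_univ, smul_eq_mul, mul_one]
    rw [Finset.sum_congr rfl (fun j _ => h1 j),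
      ← ENNReal.ofReal_sum_of_nonneg (fun j _ => sq_nonneg _)]
    rw [hbb, sum_w_one (y := y) hq hm, ENNReal.ofReal_one]
  · -- support
    refine ⟨(Finset.univ.filter fun j => bb j 0 ≠ 0).image tt, ?_, ?_, ?_⟩
    · -- cardinality
      have hub : ((Finset.univ.filter fun j => bb j 0 ≠ 0).image tt).card ≤ m + 1 := by
        calc ((Finset.univ.filter fun j => bb j 0 ≠ 0).image tt).card
            ≤ (Finset.univ.filter fun j => bb j 0 ≠ 0).card := Finset.card_image_le
          _ ≤ (Finset.univ : Finset (Fin (m+1))).card := Finset.card_filter_le _ _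
          _ = m + 1 := by rw [Finset.card_univ, Fintype.card_fin]
      have hlb : m + 1 ≤ ((Finset.univ.filter fun j => bb j 0 ≠ 0).image tt).card := by
        set s := (Finset.univ.filter fun j => bb j 0 ≠ 0).image tt with hs
        let Φ : (Fin (m+1) → ℝ) →ₗ[ℝ] ((↥s) → ℝ) :=
          { toFun := fun dc => fun x => ∑ k : Fin (m+1), dc k * P q y ρ (k:ℕ) (x : ℝ)
            map_add' := by
              intro u v; funext x
              show ∑ k : Fin (m+1), (u k + v k) * _ = _
              rw [Finset.sum_congr rfl (fun k _ => add_mul (u k) (v k) _),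
                Finset.sum_add_distrib]
              rfl
            map_smul' := by
              intro r u; funext x
              show ∑ k : Fin (m+1), (r * u k) * _ = r * ∑ k : Fin (m+1), u k * _
              rw [Finset.mul_sum]
              exact Finset.sum_congr rfl (fun k _ => by ring) }
        have hΦinj : Function.Injective Φ := by
          rw [← LinearMap.ker_eq_bot, LinearMap.ker_eq_bot']
          intro dc hdc
          set V : EuclideanSpace ℝ (Fin (m+1)) :=
            ∑ k : Fin (m+1), dc k • vv q y ρ m (k:ℕ) with hV
          have hVj : ∀ j : Fin (m+1), ⟪(bb j : EuclideanSpace ℝ (Fin (m+1))), V⟫ = 0 := by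
            intro j
            rw [hV, inner_sum]
            have : ∀ k : Fin (m+1),
                ⟪(bb j : EuclideanSpace ℝ (Fin (m+1))), dc k • vv q y ρ m (k:ℕ)⟫
                  = dc k * (bb j 0 * P q y ρ (k:ℕ) (tt j)) := by
              intro k
              rw [real_inner_smul_right, hbb, htt, keyInner q y ρ m (k:ℕ) j]
            rw [Finset.sum_congr rfl (fun k _ => this k)]
            by_cases hb0 : bb j 0 = 0
            · exact Finset.sum_eq_zero (fun k _ => by rw [hb0]; ring)
            · have hmem : tt j ∈ s := by
                rw [hs]
                exact Finset.mem_image.mpr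
                  ⟨j, Finset.mem_filter.mpr ⟨Finset.mem_univ j, hb0⟩, rfl⟩
              have hzero : ∑ k : Fin (m+1), dc k * P q y ρ (k:ℕ) (tt j) = 0 := by
                have := congrFun hdc (⟨tt j, hmem⟩ : ↥s)
                exact this
              calc ∑ k : Fin (m+1), dc k * (bb j 0 * P q y ρ (k:ℕ) (tt j))
                  = bb j 0 * ∑ k : Fin (m+1), dc k * P q y ρ (k:ℕ) (tt j) := by
                    rw [Finset.mul_sum]
                    exact Finset.sum_congr rfl (fun k _ => by ring)
                _ = 0 := by rw [hzero, mul_zero]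
          have hV0 : V = 0 := by
            have hps := OrthonormalBasis.sum_inner_mul_inner bb V V
            have hz : ∀ j : Fin (m+1),
                ⟪V, (bb j : EuclideanSpace ℝ (Fin (m+1)))⟫
                  * ⟪(bb j : EuclideanSpace ℝ (Fin (m+1))), V⟫ = 0 := by
              intro j; rw [hVj j, mul_zero]
            rw [Finset.sum_congr rfl (fun j _ => hz j), Finset.sum_const_zero] at hps
            exact inner_self_eq_zero.mp hps.symm
          funext i
          have hcoord : ⟪EuclideanSpace.single i (1:ℝ), V⟫ = dc i * gam q ρ (i:ℕ) := by
            rw [hV, inner_sum]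
            rw [Finset.sum_eq_single i]
            · rw [real_inner_smul_right, EuclideanSpace.inner_single_left]
              rw [vv_le hq hm (i:ℕ) (by omega) i, if_pos rfl]
              simp
            · intro k _ hk
              rw [real_inner_smul_right, EuclideanSpace.inner_single_left]
              rw [vv_le hq hm (k:ℕ) (by omega) i,
                if_neg (fun h => hk (Fin.ext h).symm)]
              simp
            · intro h; exact absurd (Finset.mem_univ _) h
          rw [hV0] at hcoord
          rw [inner_zero_right] at hcoord
          have hg : gam q ρ (i:ℕ) ≠ 0 := ne_of_gt (gam_pos hq hm (by omega))
          have : dc i = 0 := by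
            rcases mul_eq_zero.mp hcoord.symm with h | h
            · exact h
            · exact absurd h hg
          exact this
        have hfr := LinearMap.finrank_le_finrank_of_injective hΦinj
        rw [Module.finrank_pi ℝ, Module.finrank_pi ℝ, Fintype.card_fin, Fintype.card_coe] at hfr
        exact hfr
      omega
    · -- null complement
      rw [Measure.finset_sum_apply]
      refine Finset.sum_eq_zero (fun j _ => ?_)
      rw [Measure.smul_apply, smul_eq_mul]
      by_cases hb0 : bb j 0 = 0
      · rw [hb0]
        norm_num
      · have hmem : tt j ∈ (Finset.univ.filter fun j => bb j 0 ≠ 0).image tt :=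
          Finset.mem_image.mpr ⟨j, Finset.mem_filter.mpr ⟨Finset.mem_univ j, hb0⟩, rfl⟩
        rw [Measure.dirac_apply, Set.indicator_of_notMem (by simpa using hmem), mul_zero]
    · -- atoms
      intro x hx
      obtain ⟨j, hj, rfl⟩ := Finset.mem_image.mp hx
      have hb0 : bb j 0 ≠ 0 := (Finset.mem_filter.mp hj).2
      have hle : ENNReal.ofReal ((bb j 0)^2) ≤
          (∑ j' : Fin (m+1), ENNReal.ofReal ((bb j' 0)^2) • Measure.dirac (tt j')) {tt j} := by
        rw [Measure.finset_sum_apply]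
        have : ENNReal.ofReal ((bb j 0)^2)
            = ENNReal.ofReal ((bb j 0)^2) • Measure.dirac (tt j) {tt j} := by
          rw [Measure.dirac_apply_of_mem (Set.mem_singleton _), smul_eq_mul, mul_one]
        rw [this]
        exact Finset.single_le_sum (f := fun j' =>
          (ENNReal.ofReal ((bb j' 0)^2) • Measure.dirac (tt j')) {tt j})
          (fun _ _ => zero_le) (Finset.mem_univ j)
      intro hcon
      rw [hcon] at hle
      have : ENNReal.ofReal ((bb j 0)^2) = 0 := le_antisymm hle zero_le
      rw [ENNReal.ofReal_eq_zero] at this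
      have := sq_nonneg (bb j 0)
      have hsq : (bb j 0)^2 = 0 := le_antisymm ‹(bb j 0)^2 ≤ 0› this
      exact hb0 (pow_eq_zero_iff (by omega) |>.mp hsq)
  · -- moments
    intro n _
    rw [integral_sum_dirac (fun j => bb j 0) tt (qHermite q n)]
    rw [hbb, htt]
    exact sum_w_H hq hm n

end Main
end QH

/-- Corollary (ii): for `q > 1` and `ρ ≠ 0` with `ρ² = q^{-m}`, there exists a
probability measure `μ` on `ℝ`, supported on exactly `m + 1` points, such that
`∫ H_n(x|q) dμ(x) = ρ^n H_n(y|q)` for all `n ≥ 1`. -/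
theorem exists_discrete_solution (q y ρ : ℝ) (hq : 1 < q) (hρ : ρ ≠ 0)
    (m : ℕ) (hm : ρ ^ 2 = (q ^ m)⁻¹) :
    ∃ μ : Measure ℝ, IsProbabilityMeasure μ ∧
      (∃ s : Finset ℝ, s.card = m + 1 ∧ μ (↑s)ᶜ = 0 ∧ ∀ x ∈ s, μ {x} ≠ 0) ∧
      (∀ n : ℕ, 1 ≤ n → ∫ x, qHermite q n x ∂μ = ρ ^ n * qHermite q n y) :=
  QH.main q y ρ hq hρ m hm
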